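/- Let σ > 0, let x, δ ∈ ℝ^m, let b ∈ ℝ, and let A ⊆ ℝ^m be measurable. If the isotropic Gaussian measure N(x, σ²I) satisfies N(x, σ²I)(A) ≤ Φ(b), then the shifted measure satisfies N(x + δ, σ²I)(A) ≤ Φ(b + ‖δ‖₂/σ). -/

import Mathlib

open MeasureTheory ProbabilityTheory

open scoped ENNReal NNReal

open Finset in
lemma lintegral_pi_prod (μ : Fin m → Measure ℝ) [∀ i, SigmaFinite (μ i)]
    (g : Fin m → ℝ → ℝ≥0∞) (hg : ∀ i, Measurable (g i)) :
    ∫⁻ y, ∏ i, g i (y i) ∂Measure.pi μ = ∏ i, ∫⁻ t, g i t ∂μ i := by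
  have hF : Measurable fun y : Fin m → ℝ => ∏ i, g i (y i) :=
    Finset.measurable_prod _ fun i _ => (hg i).comp (measurable_pi_apply i)
  have key : ∀ s : Finset (Fin m), ∀ x : Fin m → ℝ,
      (∫⋯∫⁻_s, (fun y => ∏ i, g i (y i)) ∂μ) x
        = (∏ i ∈ s, ∫⁻ t, g i t ∂μ i) * ∏ i ∈ sᶜ, g i (x i) := by
    intro s
    induction s using Finset.induction with
    | empty => intro x; simp
    | @insert i s hi ih =>
      intro x
      rw [lmarginal_insert _ hF hi]
      have hx : ∀ t : ℝ, (∫⋯∫⁻_s, (fun y => ∏ i, g i (y i)) ∂μ) (Function.update x i t)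
          = (∏ j ∈ s, ∫⁻ t, g j t ∂μ j) * (g i t * ∏ j ∈ sᶜ.erase i, g j (x j)) := by
        intro t
        rw [ih]
        congr 1
        rw [← Finset.mul_prod_erase sᶜ _ (Finset.mem_compl.mpr hi), Function.update_self]
        congr 1
        exact Finset.prod_congr rfl fun j hj => by
          rw [Function.update_of_ne (Finset.ne_of_mem_erase hj)]
      simp_rw [hx]
      rw [lintegral_const_mul _ ((hg i).mul_const _), lintegral_mul_const _ (hg i),
        Finset.prod_insert hi, Finset.compl_insert]
      ring
  rw [lintegral_eq_lmarginal_univ (0 : Fin m → ℝ), key Finset.univ 0]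
  simp

lemma setLIntegral_pi_prod (μ : Fin m → Measure ℝ) [∀ i, SigmaFinite (μ i)]
    (g : Fin m → ℝ → ℝ≥0∞) (hg : ∀ i, Measurable (g i))
    {s : Fin m → Set ℝ} (hs : ∀ i, MeasurableSet (s i)) :
    ∫⁻ y in Set.pi Set.univ s, ∏ i, g i (y i) ∂Measure.pi μ
      = ∏ i, ∫⁻ t in s i, g i t ∂μ i := by
  rw [← lintegral_indicator (MeasurableSet.univ_pi hs)]
  have : ∀ y : Fin m → ℝ, (Set.pi Set.univ s).indicator (fun y => ∏ i, g i (y i)) y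
      = ∏ i, (s i).indicator (g i) (y i) := by
    intro y
    by_cases hy : y ∈ Set.pi Set.univ s
    · rw [Set.indicator_of_mem hy]
      exact Finset.prod_congr rfl fun i _ =>
        (Set.indicator_of_mem (hy i (Set.mem_univ i)) _).symm
    · rw [Set.indicator_of_notMem hy]
      rw [Set.mem_univ_pi] at hy
      push_neg at hy
      obtain ⟨i, hi⟩ := hy
      exact (Finset.prod_eq_zero (Finset.mem_univ i)
        (by rw [Set.indicator_of_notMem hi])).symm
  simp_rw [this]
  rw [lintegral_pi_prod μ _ (fun i => (hg i).indicator (hs i))]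
  exact Finset.prod_congr rfl fun i _ => lintegral_indicator (hs i) _

lemma nnreal_sq_ne_zero {σ : ℝ} (hσ : 0 < σ) : (⟨σ ^ 2, sq_nonneg σ⟩ : ℝ≥0) ≠ 0 := by
  intro h
  have := congrArg NNReal.toReal h
  change σ ^ 2 = 0 at this
  exact (pow_ne_zero 2 hσ.ne') this

instance gaussianReal_sq_prob (a σ : ℝ) :
    IsProbabilityMeasure (gaussianReal a ⟨σ ^ 2, sq_nonneg σ⟩) :=
  instIsProbabilityMeasureGaussianReal a _

lemma gaussianReal_shift_density {σ : ℝ} (hσ : 0 < σ) (a d : ℝ) :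
    (gaussianReal a ⟨σ ^ 2, sq_nonneg σ⟩).withDensity
      (fun t => ENNReal.ofReal (Real.exp ((d * (t - a) - d ^ 2 / 2) / σ ^ 2)))
      = gaussianReal (a + d) ⟨σ ^ 2, sq_nonneg σ⟩ := by
  have hv := nnreal_sq_ne_zero hσ
  have hmeas : Measurable fun t : ℝ =>
      ENNReal.ofReal (Real.exp ((d * (t - a) - d ^ 2 / 2) / σ ^ 2)) := by
    apply Measurable.ennreal_ofReal
    exact (Real.measurable_exp.comp
      ((((measurable_id.sub_const a).const_mul d).sub_const _).div_const _))
  rw [gaussianReal_of_var_ne_zero _ hv, gaussianReal_of_var_ne_zero _ hv]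
  refine (withDensity_mul _ (measurable_gaussianPDF _ _) hmeas).symm.trans ?_
  congr 1
  ext t
  simp only [Pi.mul_apply, gaussianPDF]
  refine (ENNReal.ofReal_mul (gaussianPDFReal_nonneg _ _ _)).symm.trans ?_
  congr 1
  simp only [gaussianPDFReal, NNReal.coe_mk]
  rw [mul_assoc, ← Real.exp_add]
  congr 1
  have hσ2 : (σ : ℝ) ^ 2 ≠ 0 := pow_ne_zero 2 hσ.ne'
  change Real.exp (-(t - a) ^ 2 / (2 * σ ^ 2) + (d * (t - a) - d ^ 2 / 2) / σ ^ 2)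
    = Real.exp (-(t - (a + d)) ^ 2 / (2 * σ ^ 2))
  congr 1
  field_simp
  ring

/-- The standard Gaussian CDF `Φ`. -/
noncomputable def Phi (a : ℝ) : ℝ := ((gaussianReal 0 1) (Set.Iic a)).toReal

/-- The isotropic Gaussian measure `N(x, σ²I)` on `ℝ^m`. -/
noncomputable def gaussPi (m : ℕ) (σ : ℝ) (x : EuclideanSpace ℝ (Fin m)) :
    Measure (EuclideanSpace ℝ (Fin m)) :=
  Measure.map (MeasurableEquiv.toLp 2 (Fin m → ℝ))
    (Measure.pi fun i => gaussianReal (x i) ⟨σ ^ 2, sq_nonneg σ⟩)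

instance gaussPi_prob (m : ℕ) (σ : ℝ) (x : EuclideanSpace ℝ (Fin m)) :
    IsProbabilityMeasure (gaussPi m σ x) := by
  unfold gaussPi
  exact Measure.isProbabilityMeasure_map (MeasurableEquiv.measurable _).aemeasurable

lemma measurable_euclid_apply {m : ℕ} (i : Fin m) :
    Measurable fun y : EuclideanSpace ℝ (Fin m) => y i :=
  (measurable_pi_apply i).comp (MeasurableEquiv.toLp 2 (Fin m → ℝ)).symm.measurable

lemma gaussPi_map_sub (m : ℕ) (σ : ℝ) (x : EuclideanSpace ℝ (Fin m)) :
    Measure.map (fun y => y - x) (gaussPi m σ x) = gaussPi m σ 0 := by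
  have hmeas : Measurable fun y : Fin m → ℝ => y - x.ofLp :=
    measurable_pi_lambda _ fun i => (measurable_pi_apply i).sub measurable_const
  have hP : Measure.map (fun y : Fin m → ℝ => y - x.ofLp)
      (Measure.pi fun i => gaussianReal (x i) ⟨σ ^ 2, sq_nonneg σ⟩)
      = Measure.pi fun i => gaussianReal ((0 : EuclideanSpace ℝ (Fin m)) i) ⟨σ ^ 2, sq_nonneg σ⟩ := by
    refine (Measure.pi_eq fun s hs => ?_).symm
    refine Eq.trans (Measure.map_apply hmeas (MeasurableSet.univ_pi hs)) ?_
    have hpre : (fun y : Fin m → ℝ => y - x.ofLp) ⁻¹' Set.pi Set.univ s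
        = Set.pi Set.univ fun i => (fun t => t - x i) ⁻¹' s i := rfl
    rw [hpre]
    refine Eq.trans (Measure.pi_pi _ _) ?_
    refine Finset.prod_congr rfl fun i _ => ?_
    show gaussianReal (x i) (⟨σ ^ 2, sq_nonneg σ⟩ : ℝ≥0) ((fun t => t - x i) ⁻¹' s i)
      = gaussianReal 0 (⟨σ ^ 2, sq_nonneg σ⟩ : ℝ≥0) (s i)
    have h1 : gaussianReal (x i) (⟨σ ^ 2, sq_nonneg σ⟩ : ℝ≥0)
        = (gaussianReal 0 (⟨σ ^ 2, sq_nonneg σ⟩ : ℝ≥0)).map (· + x i) := by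
      have := gaussianReal_map_add_const (μ := 0) (v := ⟨σ ^ 2, sq_nonneg σ⟩) (x i)
      rw [zero_add] at this
      exact this.symm
    rw [h1, Measure.map_apply (measurable_add_const _) ((hs i).preimage (measurable_sub_const _))]
    congr 1
    ext t
    simp
  have hE : Measurable fun y : EuclideanSpace ℝ (Fin m) => y - x :=
    (continuous_id.sub continuous_const).measurable
  rw [gaussPi, gaussPi, Measure.map_map hE (MeasurableEquiv.measurable _), ← hP,
    Measure.map_map (MeasurableEquiv.measurable _) hmeas]
  rfl

lemma gaussPi_map_eval (m : ℕ) (σ : ℝ) (x : EuclideanSpace ℝ (Fin m)) (i₀ : Fin m) :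
    Measure.map (fun y : EuclideanSpace ℝ (Fin m) => y i₀) (gaussPi m σ x)
      = gaussianReal (x i₀) ⟨σ ^ 2, sq_nonneg σ⟩ := by
  rw [gaussPi, Measure.map_map (measurable_euclid_apply i₀) (MeasurableEquiv.measurable _)]
  ext s hs
  refine Eq.trans (Measure.map_apply (measurable_pi_apply i₀) hs) ?_
  have hpre : (fun y : ∀ _ : Fin m, ℝ => y i₀) ⁻¹' s
      = Set.pi Set.univ (Function.update (fun _ => Set.univ) i₀ s) := Set.eval_preimage
  rw [hpre]
  refine Eq.trans (Measure.pi_pi _ _) ?_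
  refine Eq.trans (Fintype.prod_eq_single i₀ fun j hj => ?_) ?_
  · rw [Function.update_of_ne hj]; simp
  · rw [Function.update_self]

lemma volume_euclid (m : ℕ) :
    (volume : Measure (EuclideanSpace ℝ (Fin m)))
      = Measure.map (MeasurableEquiv.toLp 2 (Fin m → ℝ)) (Measure.pi fun _ => (volume : Measure ℝ)) := by
  rw [← volume_pi]
  exact (PiLp.volume_preserving_toLp (Fin m)).map_eq.symm

lemma euclid_norm_sq {m : ℕ} (y : EuclideanSpace ℝ (Fin m)) : ‖y‖ ^ 2 = ∑ i, y i ^ 2 := by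
  rw [EuclideanSpace.norm_eq, Real.sq_sqrt (Finset.sum_nonneg fun i _ => sq_nonneg _)]
  exact Finset.sum_congr rfl fun i _ => by rw [Real.norm_eq_abs, sq_abs]

lemma gaussPi_zero_withDensity (m : ℕ) {σ : ℝ} (hσ : 0 < σ) :
    gaussPi m σ 0 = (volume : Measure (EuclideanSpace ℝ (Fin m))).withDensity
      (fun y => ENNReal.ofReal ((Real.sqrt (2 * Real.pi * σ ^ 2))⁻¹ ^ m
        * Real.exp (-‖y‖ ^ 2 / (2 * σ ^ 2)))) := by
  have hv := nnreal_sq_ne_zero hσ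
  have hP : (Measure.pi fun i => gaussianReal ((0 : EuclideanSpace ℝ (Fin m)) i) ⟨σ ^ 2, sq_nonneg σ⟩)
      = (Measure.pi fun _ => (volume : Measure ℝ)).withDensity
        (fun y : Fin m → ℝ => ENNReal.ofReal ((Real.sqrt (2 * Real.pi * σ ^ 2))⁻¹ ^ m
          * Real.exp (-‖(MeasurableEquiv.toLp 2 (Fin m → ℝ)) y‖ ^ 2 / (2 * σ ^ 2)))) := by
    refine Measure.pi_eq fun s hs => ?_
    have hD : ∀ y : Fin m → ℝ,
        ENNReal.ofReal ((Real.sqrt (2 * Real.pi * σ ^ 2))⁻¹ ^ m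
            * Real.exp (-‖(MeasurableEquiv.toLp 2 (Fin m → ℝ)) y‖ ^ 2 / (2 * σ ^ 2)))
          = ∏ i, gaussianPDF 0 ⟨σ ^ 2, sq_nonneg σ⟩ (y i) := by
      intro y
      simp only [gaussianPDF, gaussianPDFReal, NNReal.coe_mk, sub_zero]
      rw [← ENNReal.ofReal_prod_of_nonneg (fun i _ =>
        mul_nonneg (inv_nonneg.mpr (Real.sqrt_nonneg _)) (Real.exp_nonneg _))]
      congr 1
      rw [Finset.prod_mul_distrib, Finset.prod_const, Finset.card_univ, Fintype.card_fin,
        ← Real.exp_sum, euclid_norm_sq]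
      rw [neg_div, ← Finset.sum_div]
      congr 1
      rw [Real.exp_eq_exp]
      rw [Finset.sum_neg_distrib, neg_div]
      rfl
    refine Eq.trans (withDensity_apply _ (MeasurableSet.univ_pi hs)) ?_
    refine Eq.trans (lintegral_congr fun y => hD y) ?_
    refine Eq.trans (setLIntegral_pi_prod _ _ (fun i => measurable_gaussianPDF _ _) hs) ?_
    refine Finset.prod_congr rfl fun i _ => ?_
    show ∫⁻ t in s i, gaussianPDF 0 ⟨σ ^ 2, sq_nonneg σ⟩ t ∂volume
      = gaussianReal ((0 : EuclideanSpace ℝ (Fin m)) i) ⟨σ ^ 2, sq_nonneg σ⟩ (s i)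
    rw [show (0 : EuclideanSpace ℝ (Fin m)) i = (0 : ℝ) from rfl,
      gaussianReal_of_var_ne_zero _ hv, withDensity_apply _ (hs i)]
  have hDm : Measurable fun y : EuclideanSpace ℝ (Fin m) =>
      ENNReal.ofReal ((Real.sqrt (2 * Real.pi * σ ^ 2))⁻¹ ^ m
        * Real.exp (-‖y‖ ^ 2 / (2 * σ ^ 2))) := by
    apply Measurable.ennreal_ofReal
    fun_prop
  rw [volume_euclid, gaussPi, hP]
  ext s hs
  rw [Measure.map_apply (MeasurableEquiv.measurable _) hs,
    withDensity_apply _ ((MeasurableEquiv.measurable _) hs), withDensity_apply _ hs]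
  exact (setLIntegral_map hs hDm (MeasurableEquiv.measurable _)).symm

lemma gaussPi_map_rot (m : ℕ) {σ : ℝ} (hσ : 0 < σ)
    (R : EuclideanSpace ℝ (Fin m) ≃ₗᵢ[ℝ] EuclideanSpace ℝ (Fin m)) :
    Measure.map R (gaussPi m σ 0) = gaussPi m σ 0 := by
  rw [gaussPi_zero_withDensity m hσ]
  set D : EuclideanSpace ℝ (Fin m) → ℝ≥0∞ := fun y =>
    ENNReal.ofReal ((Real.sqrt (2 * Real.pi * σ ^ 2))⁻¹ ^ m
      * Real.exp (-‖y‖ ^ 2 / (2 * σ ^ 2))) with hDdef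
  have hDR : ∀ y, D (R y) = D y := fun y => by simp only [hDdef, R.norm_map]
  ext s hs
  rw [Measure.map_apply R.continuous.measurable hs,
    withDensity_apply _ (hs.preimage R.continuous.measurable), withDensity_apply _ hs]
  calc ∫⁻ y in ⇑R ⁻¹' s, D y ∂volume = ∫⁻ y in ⇑R ⁻¹' s, D (R y) ∂volume := by
        refine setLIntegral_congr_fun (hs.preimage R.continuous.measurable) ?_
        exact fun y _ => (hDR y).symm
    _ = ∫⁻ y in s, D y ∂volume :=
        R.measurePreserving.setLIntegral_comp_preimage_emb
          (R.toHomeomorph.toMeasurableEquiv.measurableEmbedding) D s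

open RealInnerProductSpace in
lemma gaussPi_map_std (m : ℕ) {σ : ℝ} (hσ : 0 < σ) (x u : EuclideanSpace ℝ (Fin m))
    (hu : ‖u‖ = 1) (i₀ : Fin m) :
    Measure.map (fun y : EuclideanSpace ℝ (Fin m) => (⟪u, y - x⟫ : ℝ) / σ) (gaussPi m σ x)
      = gaussianReal 0 1 := by
  have hv := nnreal_sq_ne_zero hσ
  set e0 : EuclideanSpace ℝ (Fin m) := EuclideanSpace.single i₀ (1 : ℝ) with he0def
  have he0 : ‖e0‖ = 1 := by rw [he0def, EuclideanSpace.norm_single]; norm_num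
  set R : EuclideanSpace ℝ (Fin m) ≃ₗᵢ[ℝ] EuclideanSpace ℝ (Fin m) := Submodule.reflection (ℝ ∙ (u - e0))ᗮ with hRdef
  have hRu : R u = e0 := Submodule.reflection_sub (by rw [hu, he0])
  have hcomp : ∀ y : EuclideanSpace ℝ (Fin m), (⟪u, y - x⟫ : ℝ) / σ = σ⁻¹ * ((R (y - x)) i₀) := by
    intro y
    have h1 : (⟪u, y - x⟫ : ℝ) = ⟪R u, R (y - x)⟫ := (R.inner_map_map u (y - x)).symm
    have h2 : (⟪e0, R (y - x)⟫ : ℝ) = (R (y - x)) i₀ := by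
      rw [he0def, EuclideanSpace.inner_single_left]; simp
    rw [h1, hRu, h2, div_eq_inv_mul]
  have hsub : Measurable fun y : EuclideanSpace ℝ (Fin m) => y - x :=
    (continuous_id.sub continuous_const).measurable
  have hR : Measurable (⇑R) := R.continuous.measurable
  have hev : Measurable fun z : EuclideanSpace ℝ (Fin m) => z i₀ := measurable_euclid_apply i₀
  have hmul : Measurable fun t : ℝ => σ⁻¹ * t := measurable_id.const_mul _
  have step1 : Measure.map (fun y : EuclideanSpace ℝ (Fin m) => (⟪u, y - x⟫ : ℝ) / σ) (gaussPi m σ x)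
      = Measure.map (fun t : ℝ => σ⁻¹ * t)
          (Measure.map (fun z : EuclideanSpace ℝ (Fin m) => z i₀)
            (Measure.map (⇑R) (Measure.map (fun y : EuclideanSpace ℝ (Fin m) => y - x) (gaussPi m σ x)))) := by
    rw [Measure.map_map hR hsub, Measure.map_map hev (hR.comp hsub),
      Measure.map_map hmul (hev.comp (hR.comp hsub))]
    congr 1
    funext y
    exact hcomp y
  rw [step1, gaussPi_map_sub, gaussPi_map_rot m hσ, gaussPi_map_eval]
  have h4 : Measure.map (fun t : ℝ => σ⁻¹ * t)
      (gaussianReal 0 (⟨σ ^ 2, sq_nonneg σ⟩ : ℝ≥0)) = gaussianReal 0 1 := by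
    have := gaussianReal_map_const_mul (μ := 0) (v := ⟨σ ^ 2, sq_nonneg σ⟩) σ⁻¹
    rw [mul_zero] at this
    rw [show (fun t : ℝ => σ⁻¹ * t) = (σ⁻¹ * ·) from rfl, this]
    congr 1
    apply NNReal.coe_injective
    show σ⁻¹ ^ 2 * σ ^ 2 = (1 : ℝ)
    field_simp
  exact h4

lemma gaussPi_shift (m : ℕ) {σ : ℝ} (hσ : 0 < σ) (x δ : EuclideanSpace ℝ (Fin m)) :
    gaussPi m σ (x + δ) = (gaussPi m σ x).withDensity
      (fun y => ∏ i, ENNReal.ofReal (Real.exp ((δ i * (y i - x i) - δ i ^ 2 / 2) / σ ^ 2))) := by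
  have hℓ : ∀ i : Fin m, Measurable fun t : ℝ =>
      ENNReal.ofReal (Real.exp ((δ i * (t - x i) - δ i ^ 2 / 2) / σ ^ 2)) := fun i =>
    Measurable.ennreal_ofReal (Real.measurable_exp.comp
      ((((measurable_id.sub_const _).const_mul _).sub_const _).div_const _))
  have hP : (Measure.pi fun i => gaussianReal ((x + δ) i) ⟨σ ^ 2, sq_nonneg σ⟩)
      = (Measure.pi fun i => gaussianReal (x i) ⟨σ ^ 2, sq_nonneg σ⟩).withDensity
        (fun y : Fin m → ℝ => ∏ i, ENNReal.ofReal (Real.exp ((δ i * (y i - x i) - δ i ^ 2 / 2) / σ ^ 2))) := by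
    refine Measure.pi_eq fun s hs => ?_
    refine Eq.trans (withDensity_apply _ (MeasurableSet.univ_pi hs)) ?_
    refine Eq.trans (setLIntegral_pi_prod _ _ hℓ hs) ?_
    refine Finset.prod_congr rfl fun i _ => ?_
    rw [← withDensity_apply _ (hs i), gaussianReal_shift_density hσ (x i) (δ i)]
    rfl
  have hL : Measurable fun y : EuclideanSpace ℝ (Fin m) =>
      ∏ i, ENNReal.ofReal (Real.exp ((δ i * (y i - x i) - δ i ^ 2 / 2) / σ ^ 2)) :=
    Finset.measurable_prod _ fun i _ => (hℓ i).comp (measurable_euclid_apply i)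
  rw [gaussPi, gaussPi, hP]
  ext s hs
  rw [Measure.map_apply (MeasurableEquiv.measurable _) hs,
    withDensity_apply _ ((MeasurableEquiv.measurable _) hs), withDensity_apply _ hs]
  exact (setLIntegral_map hs hL (MeasurableEquiv.measurable _)).symm

lemma ofReal_Phi (r : ℝ) : ENNReal.ofReal (Phi r) = gaussianReal 0 1 (Set.Iic r) := by
  rw [Phi, ENNReal.ofReal_toReal (measure_ne_top _ _)]

lemma gauss_symm (r : ℝ) : gaussianReal 0 1 (Set.Ici (-r)) = gaussianReal 0 1 (Set.Iic r) := by
  have hmap := gaussianReal_map_const_mul (μ := 0) (v := 1) (-1)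
  rw [mul_zero] at hmap
  have h1 : NNReal.mk ((-1 : ℝ) ^ 2) (sq_nonneg _) * 1 = 1 :=
    NNReal.coe_injective (show (-1 : ℝ) ^ 2 * 1 = 1 by norm_num)
  rw [h1] at hmap
  calc gaussianReal 0 1 (Set.Ici (-r))
      = (Measure.map ((-1 : ℝ) * ·) (gaussianReal 0 1)) (Set.Ici (-r)) := by rw [hmap]
    _ = gaussianReal 0 1 (((-1 : ℝ) * ·) ⁻¹' Set.Ici (-r)) :=
        Measure.map_apply (measurable_id.const_mul _) measurableSet_Ici
    _ = gaussianReal 0 1 (Set.Iic r) := by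
        congr 1
        ext t
        simp only [Set.mem_preimage, Set.mem_Ici, Set.mem_Iic, neg_one_mul, neg_le_neg_iff]

lemma gauss_shift_Ici (c r : ℝ) :
    gaussianReal c 1 (Set.Ici (-r)) = gaussianReal 0 1 (Set.Iic (r + c)) := by
  have hmap := gaussianReal_map_add_const (μ := 0) (v := 1) c
  rw [zero_add] at hmap
  calc gaussianReal c 1 (Set.Ici (-r))
      = (Measure.map (· + c) (gaussianReal 0 1)) (Set.Ici (-r)) := by rw [hmap]
    _ = gaussianReal 0 1 ((· + c) ⁻¹' Set.Ici (-r)) :=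
        Measure.map_apply (measurable_id.add_const _) measurableSet_Ici
    _ = gaussianReal 0 1 (Set.Ici (-(r + c))) := by
        congr 1
        ext t
        simp only [Set.mem_preimage, Set.mem_Ici]
        constructor <;> intro h <;> linarith
    _ = gaussianReal 0 1 (Set.Iic (r + c)) := gauss_symm (r + c)

open RealInnerProductSpace in
/-- Neyman–Pearson upper bound: if `N(x, σ²I)(A) ≤ Φ(b)` then
`N(x + δ, σ²I)(A) ≤ Φ(b + ‖δ‖₂/σ)`. -/
theorem gaussian_shift_upper_bound (m : ℕ) (σ : ℝ) (hσ : 0 < σ)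
    (x δ : EuclideanSpace ℝ (Fin m)) (b : ℝ)
    (A : Set (EuclideanSpace ℝ (Fin m))) (hA : MeasurableSet A)
    (h : gaussPi m σ x A ≤ ENNReal.ofReal (Phi b)) :
    gaussPi m σ (x + δ) A ≤ ENNReal.ofReal (Phi (b + ‖δ‖ / σ)) := by
  by_cases hδ : δ = 0
  · subst hδ; simpa using h
  have hδn : ‖δ‖ ≠ 0 := norm_ne_zero_iff.mpr hδ
  have hc0 : 0 ≤ ‖δ‖ / σ := div_nonneg (norm_nonneg _) hσ.le
  obtain ⟨i₀, -⟩ : ∃ i, δ i ≠ 0 := by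
    by_contra h'
    push_neg at h'
    exact hδ (by ext i; exact h' i)
  set c : ℝ := ‖δ‖ / σ with hcdef
  set u : EuclideanSpace ℝ (Fin m) := ‖δ‖⁻¹ • δ with hudef
  have hu : ‖u‖ = 1 := by
    rw [hudef, norm_smul, norm_inv, norm_norm, inv_mul_cancel₀ hδn]
  set S : EuclideanSpace ℝ (Fin m) → ℝ := fun y => (⟪u, y - x⟫ : ℝ) / σ with hSdef
  have hSmeas : Measurable S := by
    apply Measurable.div_const
    exact (Continuous.inner continuous_const (continuous_id.sub continuous_const)).measurable
  have hmapS : Measure.map S (gaussPi m σ x) = gaussianReal 0 1 :=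
    gaussPi_map_std m hσ x u hu i₀
  set S' : EuclideanSpace ℝ (Fin m) → ℝ := fun y => (⟪u, y - (x + δ)⟫ : ℝ) / σ with hS'def
  have hS'meas : Measurable S' := by
    apply Measurable.div_const
    exact (Continuous.inner continuous_const (continuous_id.sub continuous_const)).measurable
  have hmapS' : Measure.map S' (gaussPi m σ (x + δ)) = gaussianReal 0 1 :=
    gaussPi_map_std m hσ (x + δ) u hu i₀
  have hud : (⟪u, δ⟫ : ℝ) = ‖δ‖ := by
    rw [hudef, real_inner_smul_left, real_inner_self_eq_norm_sq, sq, inv_mul_cancel_left₀ hδn]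
  have hSS' : ∀ y, S y = S' y + c := by
    intro y
    show (⟪u, y - x⟫ : ℝ) / σ = (⟪u, y - (x + δ)⟫ : ℝ) / σ + c
    rw [hcdef]
    have hy : y - x = y - (x + δ) + δ := by abel
    rw [hy, inner_add_right, add_div, hud]
  have hmapSc : Measure.map S (gaussPi m σ (x + δ)) = gaussianReal c 1 := by
    have hfun : S = (fun t => t + c) ∘ S' := funext fun y => hSS' y
    rw [hfun, ← Measure.map_map (measurable_add_const c) hS'meas, hmapS',
      gaussianReal_map_add_const, zero_add]
  set H : Set (EuclideanSpace ℝ (Fin m)) := S ⁻¹' Set.Ici (-b) with hHdef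
  have hH : MeasurableSet H := hSmeas measurableSet_Ici
  have hNH : gaussPi m σ x H = ENNReal.ofReal (Phi b) := by
    calc gaussPi m σ x H = Measure.map S (gaussPi m σ x) (Set.Ici (-b)) :=
          (Measure.map_apply hSmeas measurableSet_Ici).symm
      _ = gaussianReal 0 1 (Set.Ici (-b)) := by rw [hmapS]
      _ = gaussianReal 0 1 (Set.Iic b) := gauss_symm b
      _ = ENNReal.ofReal (Phi b) := (ofReal_Phi b).symm
  have hN'H : gaussPi m σ (x + δ) H = ENNReal.ofReal (Phi (b + c)) := by
    calc gaussPi m σ (x + δ) H = Measure.map S (gaussPi m σ (x + δ)) (Set.Ici (-b)) :=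
          (Measure.map_apply hSmeas measurableSet_Ici).symm
      _ = gaussianReal c 1 (Set.Ici (-b)) := by rw [hmapSc]
      _ = gaussianReal 0 1 (Set.Iic (b + c)) := gauss_shift_Ici c b
      _ = ENNReal.ofReal (Phi (b + c)) := (ofReal_Phi (b + c)).symm
  set W : EuclideanSpace ℝ (Fin m) → ℝ≥0∞ :=
    fun y => ENNReal.ofReal (Real.exp (c * S y - c ^ 2 / 2)) with hWdef
  have hWmeas : Measurable W :=
    Measurable.ennreal_ofReal (Real.measurable_exp.comp ((hSmeas.const_mul c).sub_const _))
  have hnormsq : ‖δ‖ ^ 2 = ∑ i, δ i ^ 2 := euclid_norm_sq δ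
  have hL : ∀ y : EuclideanSpace ℝ (Fin m),
      (∏ i, ENNReal.ofReal (Real.exp ((δ i * (y i - x i) - δ i ^ 2 / 2) / σ ^ 2))) = W y := by
    intro y
    rw [hWdef, ← ENNReal.ofReal_prod_of_nonneg (fun i _ => Real.exp_nonneg _), ← Real.exp_sum]
    congr 1
    have hsum : ∑ i, u i * (y i - x i) = ‖δ‖⁻¹ * ∑ i, δ i * (y i - x i) := by
      rw [Finset.mul_sum]
      refine Finset.sum_congr rfl fun i _ => ?_
      rw [hudef]
      show (‖δ‖⁻¹ • δ) i * (y i - x i) = _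
      rw [PiLp.smul_apply, smul_eq_mul]
      ring
    have hSsum : S y = (‖δ‖⁻¹ * ∑ i, δ i * (y i - x i)) / σ := by
      rw [hSdef, ← hsum]
      show (⟪u, y - x⟫ : ℝ) / σ = (∑ i, u i * (y i - x i)) / σ
      congr 1
      rw [PiLp.inner_apply]
      exact Finset.sum_congr rfl fun i _ => by simp [mul_comm]
    rw [hSsum, hcdef, ← Finset.sum_div, Finset.sum_sub_distrib, ← Finset.sum_div, ← hnormsq]
    field_simp
  have hNW : gaussPi m σ (x + δ) = (gaussPi m σ x).withDensity W := by
    rw [gaussPi_shift m hσ x δ]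
    exact congrArg _ (funext hL)
  set K : ℝ≥0∞ := ENNReal.ofReal (Real.exp (c * (-b) - c ^ 2 / 2)) with hKdef
  set N := gaussPi m σ x with hNdef
  have hle : N A ≤ N H := le_trans h (le_of_eq hNH.symm)
  have hdiff : N (A \ H) ≤ N (H \ A) := by
    have e1 : N (A \ H) + N (A ∩ H) = N A := measure_diff_add_inter A hH
    have e2 : N (H \ A) + N (H ∩ A) = N H := measure_diff_add_inter H hA
    rw [Set.inter_comm H A] at e2
    refine ENNReal.le_of_add_le_add_right (measure_ne_top N (A ∩ H)) ?_
    rw [e1, e2]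
    exact hle
  have hWK1 : ∀ y ∈ A \ H, W y ≤ K := by
    intro y hy
    have hyH : S y ≤ -b := le_of_not_ge fun hcon => hy.2 hcon
    refine ENNReal.ofReal_le_ofReal (Real.exp_le_exp.mpr ?_)
    have := mul_le_mul_of_nonneg_left hyH hc0
    linarith
  have hWK2 : ∀ y ∈ H \ A, K ≤ W y := by
    intro y hy
    have hyH : (-b : ℝ) ≤ S y := hy.1
    refine ENNReal.ofReal_le_ofReal (Real.exp_le_exp.mpr ?_)
    have := mul_le_mul_of_nonneg_left hyH hc0
    linarith
  have hdisj1 : Disjoint (A ∩ H) (A \ H) := Set.disjoint_left.mpr fun y hy hy2 => hy2.2 hy.2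
  have hdisj2 : Disjoint (H ∩ A) (H \ A) := Set.disjoint_left.mpr fun y hy hy2 => hy2.2 hy.2
  calc gaussPi m σ (x + δ) A = ∫⁻ y in A, W y ∂N := by rw [hNW, withDensity_apply _ hA]
    _ = ∫⁻ y in (A ∩ H) ∪ (A \ H), W y ∂N := by rw [Set.inter_union_diff]
    _ = ∫⁻ y in A ∩ H, W y ∂N + ∫⁻ y in A \ H, W y ∂N := lintegral_union (hA.diff hH) hdisj1
    _ ≤ ∫⁻ y in A ∩ H, W y ∂N + K * N (A \ H) := by
        refine add_le_add_right ?_ _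
        exact le_trans (setLIntegral_mono measurable_const hWK1)
          (le_of_eq (setLIntegral_const _ _))
    _ ≤ ∫⁻ y in A ∩ H, W y ∂N + K * N (H \ A) := add_le_add_right (mul_le_mul_right hdiff K) _
    _ ≤ ∫⁻ y in A ∩ H, W y ∂N + ∫⁻ y in H \ A, W y ∂N := by
        refine add_le_add_right ?_ _
        exact le_trans (le_of_eq (setLIntegral_const _ _).symm)
          (setLIntegral_mono hWmeas hWK2)
    _ = ∫⁻ y in (H ∩ A) ∪ (H \ A), W y ∂N := by
        rw [lintegral_union (hH.diff hA) hdisj2, Set.inter_comm]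
    _ = ∫⁻ y in H, W y ∂N := by rw [Set.inter_union_diff]
    _ = gaussPi m σ (x + δ) H := by rw [hNW, withDensity_apply _ hH]
    _ = ENNReal.ofReal (Phi (b + c)) := hN'H
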